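/- Let F : 2^V → [0,∞] with F(∅) = 0, and for w ∈ ℝ^V define Θ_∞(w) = inf{ Σ_{S⊆V} α_S F(S) : α_S ≥ 0 for all S ⊆ V, Σ_{S⊆V} α_S = 1, Σ_{S : i∈S} α_S ≥ |w_i| for all i ∈ V } (an infimum in [0,∞]). Then the non-homogeneous lower combinatorial envelope equals the monotonization of F: for every A ⊆ V, Θ_∞(1_A) = min{ F(S) : A ⊆ S ⊆ V }. -/

import Mathlib

open scoped BigOperators ENNReal

/-- The non-homogeneous `ℓ∞`-relaxation `Θ_∞` with values in `[0,∞]`. -/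
noncomputable def thetaInfE {V : Type*} [Fintype V] [DecidableEq V]
    (F : Finset V → ℝ≥0∞) (w : V → ℝ) : ℝ≥0∞ :=
  sInf { t : ℝ≥0∞ | ∃ α : Finset V → ℝ,
    (∀ S, 0 ≤ α S) ∧ (∑ S : Finset V, α S) = 1 ∧
    (∀ i : V, |w i| ≤ ∑ S : Finset V, if i ∈ S then α S else 0) ∧
    t = ∑ S : Finset V, ENNReal.ofReal (α S) * F S }

theorem stmt_2 {V : Type*} [Fintype V] [DecidableEq V]
    (F : Finset V → ℝ≥0∞) (hF0 : F ∅ = 0) (A : Finset V) :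
    thetaInfE F (fun i => if i ∈ A then (1 : ℝ) else 0) = ⨅ S ∈ {S : Finset V | A ⊆ S}, F S := by
  apply le_antisymm
  · -- ≤ : for each S ⊇ A use α = indicator of {S}
    refine le_iInf₂ fun S hS => ?_
    apply sInf_le
    refine ⟨fun T => if T = S then 1 else 0, fun T => by positivity, by simp, ?_, ?_⟩
    · intro i
      have : (∑ T : Finset V, if i ∈ T then (if T = S then (1:ℝ) else 0) else 0)
          = if i ∈ S then 1 else 0 := by
        rw [Finset.sum_eq_single S]
        · simp
        · intro T _ hT; simp [hT]
        · simp
      rw [this]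
      by_cases hi : i ∈ A
      · simp [hi, hS hi]
      · simp [hi]; positivity
    · rw [Finset.sum_eq_single S]
      · simp
      · intro T _ hT; simp [hT]
      · simp
  · -- ≥ : any feasible α is supported on supersets of A
    refine le_sInf fun t ht => ?_
    obtain ⟨α, hpos, hsum, hcon, rfl⟩ := ht
    -- α S = 0 if ¬ A ⊆ S
    have hzero : ∀ S : Finset V, ¬ A ⊆ S → α S = 0 := by
      intro S hS
      obtain ⟨i, hiA, hiS⟩ := Finset.not_subset.mp hS
      have h1 : (1:ℝ) ≤ ∑ T : Finset V, if i ∈ T then α T else 0 := by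
        have := hcon i; simpa [hiA] using this
      have h2 : (∑ T : Finset V, if i ∈ T then α T else 0) ≤ ∑ T : Finset V, α T := by
        apply Finset.sum_le_sum
        intro T _; split <;> [exact le_refl _; exact hpos T]
      have hdiff : ∑ T : Finset V, (α T - if i ∈ T then α T else 0) ≤ 0 := by
        rw [Finset.sum_sub_distrib, hsum]; linarith
      have heach : ∀ T ∈ Finset.univ, (0:ℝ) ≤ α T - if i ∈ T then α T else 0 := by
        intro T _; split
        · simp
        · simp [hpos T]
      have hall : ∀ T ∈ Finset.univ, α T - (if i ∈ T then α T else 0) = 0 := by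
        have := (Finset.sum_eq_zero_iff_of_nonneg heach).mp
          (le_antisymm hdiff (Finset.sum_nonneg heach))
        exact this
      have := hall S (Finset.mem_univ S)
      simp [hiS] at this
      exact this
    set m := ⨅ S ∈ {S : Finset V | A ⊆ S}, F S with hm
    calc m = ENNReal.ofReal 1 * m := by simp
    _ = (∑ S ∈ Finset.univ.filter (fun S => A ⊆ S), ENNReal.ofReal (α S)) * m := by
        rw [← ENNReal.ofReal_sum_of_nonneg (fun S _ => hpos S)]
        congr 1
        rw [Finset.sum_filter_of_ne (fun S _ h => by
          by_contra hne; exact h (hzero S hne)), hsum]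
    _ = ∑ S ∈ Finset.univ.filter (fun S => A ⊆ S), ENNReal.ofReal (α S) * m := by
        rw [Finset.sum_mul]
    _ ≤ ∑ S ∈ Finset.univ.filter (fun S => A ⊆ S), ENNReal.ofReal (α S) * F S := by
        apply Finset.sum_le_sum
        intro S hS
        apply mul_le_mul_right
        exact iInf₂_le S (Finset.mem_filter.mp hS).2
    _ ≤ ∑ S : Finset V, ENNReal.ofReal (α S) * F S := by
        apply Finset.sum_le_sum_of_subset_of_nonneg (Finset.filter_subset _ _)
        intros; exact zero_le
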